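/- Second-order accuracy of the interpolation: Let w be C^3 on [−h/2, h/2] and suppose |f''(ū)| ≥ C > 0 for all ū in the range of values between w(−h/2) and w(h/2). Let v be the interpolant defined by f'(v(x)) = f'(w(−h/2)) + (f'(w(h/2)) − f'(w(−h/2)))·(x + h/2)/h. Then sup_{x ∈ [−h/2,h/2]} |v(x) − w(x)| = O(h^2) and ∫_{−h/2}^{h/2} |v(x) − w(x)| dx = O(h^3) as h → 0. -/

import Mathlib

open Set

private lemma lip_of_deriv_bound (u : ℝ → ℝ) (hu : Differentiable ℝ u) (s : Set ℝ)
    (hs : Convex ℝ s) (K : ℝ) (hK : ∀ x ∈ s, |deriv u x| ≤ K)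
    {x y : ℝ} (hx : x ∈ s) (hy : y ∈ s) : |u y - u x| ≤ K * |y - x| := by
  have := Convex.norm_image_sub_le_of_norm_hasDerivWithin_le
    (f := u) (f' := deriv u) (C := K) (s := s)
    (fun z hz => (hu z).hasDerivAt.hasDerivWithinAt)
    (fun z hz => by simpa [Real.norm_eq_abs] using hK z hz) hs hx hy
  simpa [Real.norm_eq_abs] using this

private lemma interp_error (g : ℝ → ℝ) (hg : Differentiable ℝ g) (M a b : ℝ) (hab : a < b)
    (hlip : ∀ x ∈ Set.Icc a b, |deriv g x - deriv g a| ≤ M * (b - a)) :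
    ∀ x ∈ Set.Icc a b,
      |g x - (g a + (g b - g a) * (x - a) / (b - a))| ≤ 2 * M * (b - a) ^ 2 := by
  intro x hx
  have hba : (0:ℝ) < b - a := sub_pos.mpr hab
  set c := deriv g a with hc
  set φ : ℝ → ℝ := fun y => g y - c * y with hφ
  have hMba : 0 ≤ M * (b - a) := by
    exact le_trans (abs_nonneg _) (hlip a (Set.left_mem_Icc.mpr hab.le))
  have hder : ∀ y, HasDerivAt φ (deriv g y - c) y := by
    intro y
    have h1 : HasDerivAt (fun y : ℝ => c * y) c y := by
      simpa using (hasDerivAt_id y).const_mul c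
    exact ((hg y).hasDerivAt.sub h1)
  have hbound : ∀ z ∈ Set.Icc a b, |φ z - φ a| ≤ M * (b - a) * (b - a) := by
    intro z hz
    have h1 := Convex.norm_image_sub_le_of_norm_hasDerivWithin_le
      (f := φ) (f' := fun y => deriv g y - c) (C := M * (b - a)) (s := Set.Icc a b)
      (fun t _ => (hder t).hasDerivWithinAt)
      (fun t ht => by simpa [Real.norm_eq_abs] using hlip t ht)
      (convex_Icc a b) (Set.left_mem_Icc.mpr hab.le) hz
    have h2 : |z - a| ≤ b - a := by
      rw [abs_of_nonneg (by linarith [hz.1])]; linarith [hz.2]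
    calc |φ z - φ a| ≤ M * (b - a) * |z - a| := by
          simpa [Real.norm_eq_abs] using h1
      _ ≤ M * (b - a) * (b - a) := mul_le_mul_of_nonneg_left h2 hMba
  have hquot : 0 ≤ (x - a) / (b - a) ∧ (x - a) / (b - a) ≤ 1 := by
    constructor
    · exact div_nonneg (by linarith [hx.1]) hba.le
    · rw [div_le_one hba]; linarith [hx.2]
  have hE : g x - (g a + (g b - g a) * (x - a) / (b - a))
      = (φ x - φ a) - (φ b - φ a) * ((x - a) / (b - a)) := by
    simp only [hφ]
    field_simp
    ring
  rw [hE]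
  have h1 := hbound x hx
  have h2 := hbound b (Set.right_mem_Icc.mpr hab.le)
  calc |(φ x - φ a) - (φ b - φ a) * ((x - a) / (b - a))|
      ≤ |φ x - φ a| + |(φ b - φ a) * ((x - a) / (b - a))| := abs_sub _ _
    _ ≤ M * (b - a) * (b - a) + M * (b - a) * (b - a) * 1 := by
        rw [abs_mul]
        gcongr
        rw [abs_of_nonneg hquot.1]; exact hquot.2
    _ = 2 * M * (b - a) ^ 2 := by ring

theorem interpolation_second_order (f w : ℝ → ℝ) (hf : ContDiff ℝ 3 f)
    (hw : ContDiff ℝ 3 w) (C : ℝ) (hC : 0 < C)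
    (hf'' : ∀ h : ℝ, 0 < h → ∀ u ∈ Set.uIcc (w (-(h / 2))) (w (h / 2)),
      C ≤ |deriv (deriv f) u|)
    (v : ℝ → ℝ → ℝ)
    (hv : ∀ h : ℝ, 0 < h → ∀ x ∈ Set.Icc (-(h / 2)) (h / 2),
      deriv f (v h x) = deriv f (w (-(h / 2))) +
        (deriv f (w (h / 2)) - deriv f (w (-(h / 2)))) * (x + h / 2) / h)
    (hvrange : ∀ h : ℝ, 0 < h → ∀ x ∈ Set.Icc (-(h / 2)) (h / 2),
      v h x ∈ Set.uIcc (w (-(h / 2))) (w (h / 2))) :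
    ∃ K > 0, ∃ h0 > 0, ∀ h : ℝ, 0 < h → h < h0 →
      (∀ x ∈ Set.Icc (-(h / 2)) (h / 2), |v h x - w x| ≤ K * h ^ 2) ∧
        (∫ x in (-(h / 2))..(h / 2), |v h x - w x|) ≤ K * h ^ 3 := by
  have hF2 : ContDiff ℝ 2 (deriv f) :=
    ((contDiff_succ_iff_deriv (n := 2)).mp (by exact_mod_cast hf)).2.2
  have hFdiff : Differentiable ℝ (deriv f) := hF2.differentiable (by norm_num)
  have hF'cont : Continuous (deriv (deriv f)) := hF2.continuous_deriv (by norm_num)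
  have hwcont : Continuous w := hw.continuous
  set g : ℝ → ℝ := fun x => deriv f (w x) with hgdef
  have hg2 : ContDiff ℝ 2 g := hF2.comp (hw.of_le (by norm_num))
  have hgdiff : Differentiable ℝ g := hg2.differentiable (by norm_num)
  have hg'1 : ContDiff ℝ 1 (deriv g) :=
    ((contDiff_succ_iff_deriv (n := 1)).mp (by exact_mod_cast hg2)).2.2
  have hg'diff : Differentiable ℝ (deriv g) := hg'1.differentiable (by norm_num)
  have hg''cont : Continuous (deriv (deriv g)) := hg'1.continuous_deriv le_rfl
  obtain ⟨M, hM⟩ := (isCompact_Icc (a := (-1:ℝ)) (b := 1)).exists_bound_of_continuousOn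
    hg''cont.continuousOn
  have hM0 : 0 ≤ M := le_trans (norm_nonneg _) (hM 0 (by norm_num))
  -- C ≤ |f'' (w 0)|
  have hC0 : C ≤ |deriv (deriv f) (w 0)| := by
    have htend : Filter.Tendsto (fun t : ℝ => |deriv (deriv f) (w (t / 2))|)
        (nhdsWithin 0 (Set.Ioi 0)) (nhds |deriv (deriv f) (w 0)|) := by
      have hcont : Continuous fun t : ℝ => |deriv (deriv f) (w (t / 2))| :=
        (hF'cont.comp (hwcont.comp (continuous_id.div_const 2))).abs
      have h0 : |deriv (deriv f) (w (0 / 2))| = |deriv (deriv f) (w 0)| := by norm_num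
      have := hcont.continuousAt (x := (0:ℝ))
      rw [← h0]
      exact this.tendsto.mono_left nhdsWithin_le_nhds
    refine ge_of_tendsto htend ?_
    filter_upwards [self_mem_nhdsWithin] with t ht
    exact hf'' t ht (w (t / 2)) Set.right_mem_uIcc
  -- δ such that |f''| ≥ C/2 near w 0
  obtain ⟨δ', hδ'pos, hδ'⟩ := Metric.continuousAt_iff.mp
    ((hF'cont.abs).continuousAt (x := w 0)) (C / 2) (by linarith)
  obtain ⟨δ, hδdef⟩ : ∃ δ : ℝ, δ = δ' / 2 := ⟨δ' / 2, rfl⟩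
  have hδpos : 0 < δ := by rw [hδdef]; positivity
  have hδ : ∀ y ∈ Set.Icc (w 0 - δ) (w 0 + δ), C / 2 ≤ |deriv (deriv f) y| := by
    intro y hy
    have hd : dist y (w 0) < δ' := by
      rw [Real.dist_eq]
      have : |y - w 0| ≤ δ := abs_le.mpr ⟨by linarith [hy.1], by linarith [hy.2]⟩
      rw [hδdef] at this
      linarith
    have h2 := hδ' hd
    rw [Real.dist_eq] at h2
    have h3 := abs_le.mp h2.le
    linarith [h3.1, hC0]
  -- h1 from continuity of w at 0
  obtain ⟨h1, hh1pos, hh1⟩ := Metric.continuousAt_iff.mp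
    (hwcont.continuousAt (x := (0:ℝ))) δ hδpos
  refine ⟨4 * M / C + 1, by positivity, min 1 h1, by positivity, ?_⟩
  intro h hpos hh0
  have hlt1 : h < 1 := lt_of_lt_of_le hh0 (min_le_left _ _)
  have hlth1 : h < h1 := lt_of_lt_of_le hh0 (min_le_right _ _)
  have hab : -(h / 2) < h / 2 := by linarith
  have hsub1 : Set.Icc (-(h / 2)) (h / 2) ⊆ Set.Icc (-1 : ℝ) 1 :=
    fun x hx => ⟨by linarith [hx.1], by linarith [hx.2]⟩
  have hwball : ∀ x ∈ Set.Icc (-(h / 2)) (h / 2), w x ∈ Set.Icc (w 0 - δ) (w 0 + δ) := by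
    intro x hx
    have hxlt : dist x 0 < h1 := by
      rw [Real.dist_eq, sub_zero]
      have : |x| ≤ h / 2 := abs_le.mpr ⟨by linarith [hx.1], hx.2⟩
      linarith
    have h2 := hh1 hxlt
    rw [Real.dist_eq] at h2
    have h3 := abs_le.mp h2.le
    exact ⟨by linarith [h3.1], by linarith [h3.2]⟩
  have hvball : ∀ x ∈ Set.Icc (-(h / 2)) (h / 2),
      v h x ∈ Set.Icc (w 0 - δ) (w 0 + δ) := by
    intro x hx
    have hsub : Set.uIcc (w (-(h / 2))) (w (h / 2)) ⊆ Set.Icc (w 0 - δ) (w 0 + δ) :=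
      Set.ordConnected_Icc.uIcc_subset
        (hwball _ (Set.left_mem_Icc.mpr hab.le))
        (hwball _ (Set.right_mem_Icc.mpr hab.le))
    exact hsub (hvrange h hpos x hx)
  -- Lipschitz bound for deriv g on the interval
  have hlip : ∀ x ∈ Set.Icc (-(h / 2)) (h / 2),
      |deriv g x - deriv g (-(h / 2))| ≤ M * (h / 2 - -(h / 2)) := by
    intro x hx
    have hLb := lip_of_deriv_bound (deriv g) hg'diff (Set.Icc (-1 : ℝ) 1) (convex_Icc _ _)
      M (fun z hz => by simpa [Real.norm_eq_abs] using hM z hz)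
      (hsub1 (Set.left_mem_Icc.mpr hab.le)) (hsub1 hx)
    refine le_trans hLb ?_
    have hxa : |x - -(h / 2)| ≤ h / 2 - -(h / 2) := by
      rw [abs_of_nonneg (by linarith [hx.1])]; linarith [hx.2]
    exact mul_le_mul_of_nonneg_left hxa hM0
  have hinterp := interp_error g hgdiff M (-(h / 2)) (h / 2) hab hlip
  have hkeyF : ∀ x ∈ Set.Icc (-(h / 2)) (h / 2),
      |deriv f (v h x) - g x| ≤ 2 * M * h ^ 2 := by
    intro x hx
    have hvx : deriv f (v h x)
        = g (-(h / 2)) + (g (h / 2) - g (-(h / 2))) * (x - -(h / 2)) / (h / 2 - -(h / 2)) := by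
      have hveq := hv h hpos x hx
      have e1 : x - -(h / 2) = x + h / 2 := by ring
      have e2 : h / 2 - -(h / 2) = h := by ring
      rw [e1, e2]
      exact hveq
    have hie := hinterp x hx
    have e2 : h / 2 - -(h / 2) = h := by ring
    rw [e2] at hie
    calc |deriv f (v h x) - g x|
        = |g x - (g (-(h / 2)) + (g (h / 2) - g (-(h / 2))) * (x - -(h / 2)) / h)| := by
          rw [hvx, e2, abs_sub_comm]
      _ ≤ 2 * M * h ^ 2 := hie
  -- MVT lower bound
  have hmvt : ∀ p ∈ Set.Icc (w 0 - δ) (w 0 + δ), ∀ q ∈ Set.Icc (w 0 - δ) (w 0 + δ),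
      C / 2 * |q - p| ≤ |deriv f q - deriv f p| := by
    have key : ∀ p q : ℝ, p < q → p ∈ Set.Icc (w 0 - δ) (w 0 + δ) →
        q ∈ Set.Icc (w 0 - δ) (w 0 + δ) →
        C / 2 * |q - p| ≤ |deriv f q - deriv f p| := by
      intro p q hpq hp hq
      obtain ⟨c, hcmem, hc⟩ := exists_deriv_eq_slope (deriv f) hpq
        hFdiff.continuous.continuousOn hFdiff.differentiableOn
      have hcball : c ∈ Set.Icc (w 0 - δ) (w 0 + δ) :=
        ⟨by linarith [hcmem.1, hp.1], by linarith [hcmem.2, hq.2]⟩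
      have hFc := hδ c hcball
      have hqp : (0:ℝ) < q - p := sub_pos.mpr hpq
      have heq : |deriv f q - deriv f p| = |deriv (deriv f) c| * (q - p) := by
        have h5 : deriv f q - deriv f p = deriv (deriv f) c * (q - p) := by
          field_simp at hc
          linarith [hc]
        rw [h5, abs_mul, abs_of_pos hqp]
      rw [heq, abs_of_pos hqp]
      exact mul_le_mul_of_nonneg_right hFc hqp.le
    intro p hp q hq
    rcases lt_trichotomy p q with hlt | heq | hgt
    · exact key p q hlt hp hq
    · subst heq; simp
    · have h6 := key q p hgt hq hp
      rw [abs_sub_comm p q, abs_sub_comm (deriv f p) (deriv f q)] at h6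
      exact h6
  -- sup bound
  have hsup : ∀ x ∈ Set.Icc (-(h / 2)) (h / 2),
      |v h x - w x| ≤ (4 * M / C + 1) * h ^ 2 := by
    intro x hx
    have h1' := hmvt (w x) (hwball x hx) (v h x) (hvball x hx)
    have h2' : |deriv f (v h x) - deriv f (w x)| ≤ 2 * M * h ^ 2 := hkeyF x hx
    have h3' : C / 2 * |v h x - w x| ≤ 2 * M * h ^ 2 := le_trans h1' h2'
    have h4' : |v h x - w x| ≤ 4 * M / C * h ^ 2 := by
      rw [div_mul_eq_mul_div, le_div_iff₀ hC]
      nlinarith [h3']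
    calc |v h x - w x| ≤ 4 * M / C * h ^ 2 := h4'
      _ ≤ (4 * M / C + 1) * h ^ 2 := by nlinarith [sq_nonneg h]
  refine ⟨hsup, ?_⟩
  have hKh3 : 0 ≤ (4 * M / C + 1) * h ^ 3 := by positivity
  by_cases hint : IntervalIntegrable (fun x => |v h x - w x|)
      MeasureTheory.volume (-(h / 2)) (h / 2)
  · have hmono := intervalIntegral.integral_mono_on hab.le hint
      (intervalIntegrable_const (c := (4 * M / C + 1) * h ^ 2)) hsup
    calc (∫ x in (-(h / 2))..(h / 2), |v h x - w x|)
        ≤ ∫ _x in (-(h / 2))..(h / 2), (4 * M / C + 1) * h ^ 2 := hmono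
      _ = (4 * M / C + 1) * h ^ 2 * (h / 2 - -(h / 2)) := by
          rw [intervalIntegral.integral_const, smul_eq_mul, mul_comm]
      _ = (4 * M / C + 1) * h ^ 3 := by ring
  · rw [intervalIntegral.integral_undef hint]
    exact hKh3
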